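/- Let ε ∈ ℝ^n have i.i.d. N(0, σ²) coordinates with σ > 0, and let 0 < Δ ≤ 1. Then P( ‖ε‖_n ≤ σΔ ) ≤ exp( −(n/4)(1 − Δ²)² ). -/

import Mathlib

open scoped BigOperators

/-- The normalized norm `‖a‖_n = sqrt( (∑ a_j^2) / n )`. -/
noncomputable def normN {n : ℕ} (a : Fin n → ℝ) : ℝ :=
  Real.sqrt ((∑ j, a j ^ 2) / n)

/-- `Ω` is a norm on `ℝ^p`. -/
def IsNorm {p : ℕ} (Ω : (Fin p → ℝ) → ℝ) : Prop :=
  (∀ x y, Ω (x + y) ≤ Ω x + Ω y) ∧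
  (∀ (c : ℝ) (x), Ω (c • x) = |c| * Ω x) ∧
  (∀ x, Ω x = 0 → x = 0)

/-- The dual norm `Ω*(x) = max_{Ω(z) ≤ 1} zᵀx`. -/
noncomputable def dualNorm {p : ℕ} (Ω : (Fin p → ℝ) → ℝ) (x : Fin p → ℝ) : ℝ :=
  sSup {r | ∃ z, Ω z ≤ 1 ∧ r = ∑ i, z i * x i}

/-- `β_S` : the restriction of `β` to `S`, extended by zero off `S`. -/
def restrict {p : ℕ} (S : Finset (Fin p)) (β : Fin p → ℝ) : Fin p → ℝ :=
  fun i => if i ∈ S then β i else 0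

/-- `Ω'` is a norm on the coordinates in `Sᶜ` (definiteness is required only for
vectors vanishing on `S`). -/
def IsNormOn {p : ℕ} (S : Finset (Fin p)) (Ω' : (Fin p → ℝ) → ℝ) : Prop :=
  (∀ x y, Ω' (x + y) ≤ Ω' x + Ω' y) ∧
  (∀ (c : ℝ) (x), Ω' (c • x) = |c| * Ω' x) ∧
  (∀ x, (∀ i ∈ S, x i = 0) → Ω' x = 0 → x = 0)

/-- `Ω` is weakly decomposable for the (allowed) set `S`, with associated norm `Ωc`
on the coordinates in `Sᶜ`. -/
def WeaklyDecomposable {p : ℕ} (Ω : (Fin p → ℝ) → ℝ) (S : Finset (Fin p))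
    (Ωc : (Fin p → ℝ) → ℝ) : Prop :=
  IsNorm Ω ∧ IsNormOn S Ωc ∧
  ∀ β : Fin p → ℝ, Ω (restrict S β) + Ωc (restrict Sᶜ β) ≤ Ω β

/-- The `Ω`-eigenvalue `δ_Ω(L,S)`. -/
noncomputable def omegaEigen {n p : ℕ} (X : Matrix (Fin n) (Fin p) ℝ)
    (Ω Ωc : (Fin p → ℝ) → ℝ) (S : Finset (Fin p)) (L : ℝ) : ℝ :=
  sInf {r | ∃ β : Fin p → ℝ, Ω (restrict S β) = 1 ∧ Ωc (restrict Sᶜ β) ≤ L ∧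
    r = normN (X.mulVec (restrict S β) - X.mulVec (restrict Sᶜ β))}

/-- The `Ω`-effective sparsity `Γ_Ω²(L,S) = 1/δ_Ω²(L,S)`. -/
noncomputable def effSparsity {n p : ℕ} (X : Matrix (Fin n) (Fin p) ℝ)
    (Ω Ωc : (Fin p → ℝ) → ℝ) (S : Finset (Fin p)) (L : ℝ) : ℝ :=
  1 / (omegaEigen X Ω Ωc S L) ^ 2

open MeasureTheory ProbabilityTheory

open Real
open scoped NNReal ENNReal

lemma log_one_add_ge {u : ℝ} (hu : 0 ≤ u) : u - u ^ 2 / 2 ≤ Real.log (1 + u) := by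
  have key : ∀ x ∈ Set.Ici (0:ℝ), HasDerivAt (fun x => Real.log (1 + x) - x + x ^ 2 / 2)
      ((1 + x)⁻¹ - 1 + x) x := by
    intro x hx
    have hx0 : (0:ℝ) ≤ x := hx
    have h1 : (1:ℝ) + x ≠ 0 := by positivity
    have hlog : HasDerivAt (fun x : ℝ => Real.log (1 + x)) (1 * (1 + x)⁻¹) x :=
      (((hasDerivAt_id x).const_add 1).log h1)
    have hsq : HasDerivAt (fun x : ℝ => x ^ 2 / 2) (2 * x ^ 1 / 2) x :=
      (hasDerivAt_pow 2 x).div_const 2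
    have := (hlog.sub (hasDerivAt_id x)).add hsq
    exact this.congr_deriv (by ring)
  have mono : MonotoneOn (fun x => Real.log (1 + x) - x + x ^ 2 / 2) (Set.Ici (0:ℝ)) := by
    apply monotoneOn_of_deriv_nonneg (convex_Ici 0)
    · exact continuousOn_of_forall_continuousAt fun x hx => ((key x hx).continuousAt)
    · intro x hx
      rw [interior_Ici] at hx
      exact ((key x (Set.Ioi_subset_Ici_self hx)).differentiableAt).differentiableWithinAt
    · intro x hx
      rw [interior_Ici] at hx
      rw [(key x (Set.Ioi_subset_Ici_self hx)).deriv]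
      have hx9 : (0:ℝ) < x := hx
      have h1 : (0:ℝ) < 1 + x := by linarith
      have h2 : (1 + x)⁻¹ - 1 + x = x ^ 2 / (1 + x) := by field_simp; ring
      rw [h2]; positivity
  have h0 : (fun x => Real.log (1 + x) - x + x ^ 2 / 2) 0 = 0 := by simp
  have := mono (Set.self_mem_Ici) hu hu
  simp only [h0] at this
  linarith [this]

lemma gauss_exp_int (v : ℝ≥0) (hv : v ≠ 0) (t : ℝ) (ht : 0 ≤ t) :
    ∫ x, Real.exp (-t * x ^ 2) ∂(gaussianReal 0 v) = Real.sqrt (1 / (1 + 2 * v * t)) := by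
  have hv0 : (0:ℝ) < v := lt_of_le_of_ne v.coe_nonneg (by exact_mod_cast (Ne.symm hv))
  rw [gaussianReal_of_var_ne_zero 0 hv]
  have hpdf : (gaussianPDF 0 v) = fun x => ((Real.toNNReal (gaussianPDFReal 0 v x) : ℝ≥0) : ℝ≥0∞) := by
    ext x; rfl
  rw [hpdf, integral_withDensity_eq_integral_smul
    ((measurable_gaussianPDFReal 0 v).real_toNNReal) _]
  have hb : (0:ℝ) < t + (2 * v)⁻¹ := by positivity
  have heq : ∀ x : ℝ, (Real.toNNReal (gaussianPDFReal 0 v x)) • Real.exp (-t * x ^ 2)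
      = (Real.sqrt (2 * π * v))⁻¹ * Real.exp (-(t + (2 * v)⁻¹) * x ^ 2) := by
    intro x
    rw [NNReal.smul_def, smul_eq_mul, Real.coe_toNNReal _ (gaussianPDFReal_nonneg 0 v x),
      gaussianPDFReal]
    rw [mul_assoc, ← Real.exp_add]
    congr 1
    push_cast
    field_simp
    ring
  rw [funext heq, integral_const_mul, integral_gaussian]
  rw [← Real.sqrt_inv, ← Real.sqrt_mul (by positivity)]
  congr 1
  have h1 : (1:ℝ) + 2 * v * t > 0 := by positivity
  push_cast
  field_simp
  ring

lemma final_bound (n : ℕ) (u : ℝ) (hu0 : 0 ≤ u)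
    (hlog : u - u ^ 2 / 2 ≤ Real.log (1 + u)) :
    Real.exp ((n : ℝ) * (1 - u) * u / 2) * (Real.sqrt (1 / (1 + u))) ^ n
      ≤ Real.exp (-((n : ℝ) / 4) * u ^ 2) := by
  have h1u : (0:ℝ) < 1 + u := by linarith
  have hc : (0:ℝ) < 1 / (1 + u) := by positivity
  have hs : Real.sqrt (1 / (1 + u)) = Real.exp (Real.log (1 / (1 + u)) / 2) := by
    rw [← Real.log_sqrt hc.le, Real.exp_log (Real.sqrt_pos.mpr hc)]
  rw [hs, ← Real.exp_nat_mul, ← Real.exp_add, Real.exp_le_exp, one_div,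
    Real.log_inv]
  have hint : 0 ≤ ((n:ℝ) / 2) * (Real.log (1 + u) - (u - u ^ 2 / 2)) :=
    mul_nonneg (by positivity) (by linarith)
  nlinarith [hint]

/-- for i.i.d. `N(0,σ²)` errors and `0 < Δ ≤ 1`,
`P(‖ε‖_n ≤ σΔ) ≤ exp(−(n/4)(1 − Δ²)²)`. -/
theorem chi_lower_tail {n : ℕ} {Ω' : Type*} [MeasurableSpace Ω']
    (μ : Measure Ω') [IsProbabilityMeasure μ]
    (ε : Ω' → Fin n → ℝ) (hmeas : ∀ i, Measurable fun ω => ε ω i)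
    (σ : ℝ) (hσ : 0 < σ)
    (hgauss : ∀ i, μ.map (fun ω => ε ω i) = gaussianReal 0 ⟨σ ^ 2, sq_nonneg σ⟩)
    (hindep : iIndepFun
      (fun i ω => ε ω i) μ)
    (Δ : ℝ) (hΔ0 : 0 < Δ) (hΔ1 : Δ ≤ 1) :
    (μ {ω | normN (ε ω) ≤ σ * Δ}).toReal
      ≤ Real.exp (-((n : ℝ) / 4) * (1 - Δ ^ 2) ^ 2) := by
  rcases Nat.eq_zero_or_pos n with hn | hn
  · subst hn
    simp only [Nat.cast_zero, zero_div, neg_zero, zero_mul, Real.exp_zero]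
    exact ENNReal.toReal_le_of_le_ofReal zero_le_one (by simpa using prob_le_one)
  have hn' : (0:ℝ) < n := by exact_mod_cast hn
  have hΔsq : Δ ^ 2 ≤ 1 := pow_le_one₀ hΔ0.le hΔ1
  set v : ℝ≥0 := ⟨σ ^ 2, sq_nonneg σ⟩ with hv_def
  have hv : v ≠ 0 := by
    simp only [hv_def, ← NNReal.coe_ne_zero]
    exact NNReal.coe_ne_zero.mp (by positivity : (0:ℝ) < σ ^ 2).ne'
  set t : ℝ := (1 - Δ ^ 2) / (2 * σ ^ 2) with ht_def
  have ht : 0 ≤ t := by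
    apply div_nonneg (by linarith) (by positivity)
  set X : Fin n → Ω' → ℝ := fun i ω => (ε ω i) ^ 2 with hX_def
  have hXmeas : ∀ i, Measurable (X i) := fun i => (hmeas i).pow_const 2
  have hXindep : iIndepFun X μ :=
    hindep.comp (fun _ x => x ^ 2) (fun _ => measurable_id.pow_const 2)
  -- event rewriting
  have hset : {ω | normN (ε ω) ≤ σ * Δ} = {ω | (∑ i, X i) ω ≤ n * σ ^ 2 * Δ ^ 2} := by
    ext ω
    simp only [Set.mem_setOf_eq, normN, Finset.sum_apply, hX_def]
    rw [show σ * Δ = Real.sqrt ((σ * Δ) ^ 2) from (Real.sqrt_sq (by positivity)).symm,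
      Real.sqrt_le_sqrt_iff (by positivity), div_le_iff₀ hn']
    constructor <;> intro h <;> nlinarith [h]
  -- integrability
  have hsum_meas : Measurable (fun ω => ∑ i, X i ω) := by
    exact Finset.measurable_sum _ (fun i _ => hXmeas i)
  have h_int : Integrable (fun ω => Real.exp ((-t) * (∑ i, X i) ω)) μ := by
    simp only [Finset.sum_apply]
    refine Integrable.mono' (integrable_const 1)
      ((hsum_meas.const_mul (-t)).exp.aestronglyMeasurable) (ae_of_all _ fun ω => ?_)
    rw [Real.norm_eq_abs, abs_of_pos (Real.exp_pos _)]
    calc Real.exp ((-t) * ∑ i, X i ω) ≤ Real.exp 0 := by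
          rw [Real.exp_le_exp]
          have : 0 ≤ ∑ i, X i ω := by
            simp only [hX_def]; positivity
          nlinarith
      _ = 1 := Real.exp_zero
  -- Markov / Chernoff
  have hmarkov := measure_le_le_exp_mul_mgf (μ := μ) (X := ∑ i, X i)
    (n * σ ^ 2 * Δ ^ 2) (neg_nonpos.mpr ht) h_int
  rw [hset]
  refine hmarkov.trans ?_
  -- compute mgf
  have hmgf_i : ∀ i, mgf (X i) μ (-t) = Real.sqrt (1 / (2 - Δ ^ 2)) := by
    intro i
    have hsm : AEStronglyMeasurable (fun x => Real.exp (-t * x ^ 2))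
        (μ.map (fun ω => ε ω i)) :=
      (((measurable_id.pow_const 2).const_mul (-t)).exp).aestronglyMeasurable
    calc mgf (X i) μ (-t) = ∫ ω, Real.exp ((-t) * X i ω) ∂μ := rfl
      _ = ∫ x, Real.exp (-t * x ^ 2) ∂(μ.map (fun ω => ε ω i)) := by
          rw [integral_map (hmeas i).aemeasurable hsm]
      _ = Real.sqrt (1 / (1 + 2 * v * t)) := by
          rw [hgauss i]; exact gauss_exp_int v hv t ht
      _ = Real.sqrt (1 / (2 - Δ ^ 2)) := by
          congr 2
          have hvc : (v : ℝ) = σ ^ 2 := rfl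
          rw [hvc, ht_def]
          field_simp
          ring
  rw [hXindep.mgf_sum hXmeas Finset.univ]
  simp only [hmgf_i, Finset.prod_const, Finset.card_univ, Fintype.card_fin]
  -- final numeric bound
  have hta : -(-t) * (n * σ ^ 2 * Δ ^ 2) = (n : ℝ) * (1 - (1 - Δ ^ 2)) * (1 - Δ ^ 2) / 2 := by
    rw [ht_def]; field_simp; ring
  have h2 : (2 : ℝ) - Δ ^ 2 = 1 + (1 - Δ ^ 2) := by ring
  rw [hta, h2]
  have := final_bound n (1 - Δ ^ 2) (by linarith) (log_one_add_ge (by linarith))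
  calc Real.exp ((n : ℝ) * (1 - (1 - Δ ^ 2)) * (1 - Δ ^ 2) / 2)
        * Real.sqrt (1 / (1 + (1 - Δ ^ 2))) ^ n
      ≤ Real.exp (-((n : ℝ) / 4) * (1 - Δ ^ 2) ^ 2) := this
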